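/- arXiv:1701.05817 — 2 statements merged into one kernel-verified Lean document; each statement's English description precedes it below -/
import Mathlib

section
/- Let M be a finitely generated free abelian group, A a finitely generated commutative M-graded algebra over a field k, and H a subgroup of M. Then the subalgebra A_H = ⊕_{u ∈ H} A_u is a finitely generated k-algebra. -/
theorem addSubmonoid_fg_of_sub_closed {ι : Type*} [Fintype ι] (E : AddSubmonoid (ι → ℕ))
    (hsub : ∀ e ∈ E, ∀ f ∈ E, f ≤ e → e - f ∈ E) : E.FG := by
  classical
  set P : (ι → ℕ) → Prop := fun g => g ∈ E ∧ g ≠ 0 with hP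
  set Min : Set (ι → ℕ) := {f | Minimal P f} with hMin
  have hanti : IsAntichain (· ≤ ·) Min := by
    intro a ha b hb hne hab
    exact hne (le_antisymm hab (hb.2 ha.1 hab))
  have hfin : Min.Finite :=
    hanti.finite_of_partiallyWellOrderedOn
      ((Set.IsPWO.pi (s := fun _ : ι => (Set.univ : Set ℕ)) (fun _ => Set.isPWO_of_wellQuasiOrderedLE _)).mono (by simp))
  have hexists : ∀ e : ι → ℕ, P e → ∃ f, Minimal P f ∧ f ≤ e := by
    intro e he
    have hne : ∃ n, ∃ f, (P f ∧ f ≤ e) ∧ ∑ i, f i = n := ⟨_, e, ⟨he, le_rfl⟩, rfl⟩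
    obtain ⟨f, ⟨hf, hfe⟩, hfsum⟩ := Nat.find_spec hne
    refine ⟨f, ⟨hf, fun c hc hcf => ?_⟩, hfe⟩
    by_contra hfc
    have hcne : c ≠ f := fun h => hfc (h ▸ le_rfl)
    have hlt : ∑ i, c i < ∑ i, f i := by
      refine Finset.sum_lt_sum (fun i _ => hcf i) ?_
      by_contra hno
      push_neg at hno
      exact hcne (funext fun i => le_antisymm (hcf i) (hno i (Finset.mem_univ i)))
    have : Nat.find hne ≤ ∑ i, c i :=
      Nat.find_le ⟨c, ⟨hc, le_trans hcf hfe⟩, rfl⟩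
    omega
  refine ⟨hfin.toFinset, le_antisymm ?_ ?_⟩
  · rw [AddSubmonoid.closure_le]
    intro f hf
    simp only [Set.Finite.coe_toFinset, hMin, Set.mem_setOf_eq] at hf
    exact hf.1.1
  · have main : ∀ n : ℕ, ∀ e ∈ E, ∑ i, e i = n →
        e ∈ AddSubmonoid.closure (hfin.toFinset : Set (ι → ℕ)) := by
      intro n
      induction n using Nat.strong_induction_on with
      | _ n ih =>
        intro e he hn
        by_cases h0 : e = 0
        · subst h0; exact zero_mem _
        · obtain ⟨f, hfmin, hfe⟩ := hexists e ⟨he, h0⟩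
          have hfE : f ∈ E := hfmin.1.1
          have hfne : f ≠ 0 := hfmin.1.2
          have hsubE : e - f ∈ E := hsub e he f hfE hfe
          have key : (e - f) + f = e := by
            funext i
            have h1 : f i ≤ e i := hfe i
            simp only [Pi.add_apply, Pi.sub_apply]
            omega
          have hsum : ∑ i, (e - f) i + ∑ i, f i = n := by
            rw [← Finset.sum_add_distrib]
            rw [← hn]
            exact Finset.sum_congr rfl fun i _ => by rw [← key]; simp
          have hfpos : 0 < ∑ i, f i := by
            rcases Nat.eq_zero_or_pos (∑ i, f i) with h | h
            · exact (hfne (funext fun i =>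
                Finset.sum_eq_zero_iff.mp h i (Finset.mem_univ i))).elim
            · exact h
          have hmem := ih (∑ i, (e - f) i) (by omega) (e - f) hsubE rfl
          have hfmem : f ∈ AddSubmonoid.closure (hfin.toFinset : Set (ι → ℕ)) :=
            AddSubmonoid.subset_closure (by simpa [hMin] using hfmin)
          rw [← key]
          exact add_mem hmem hfmem
    exact fun e he => main (∑ i, e i) e he rfl

/-- Let `M` be a finitely generated free abelian group, `A` a finitely generated
commutative `M`-graded algebra over a field `k`, and `H ≤ M` a subgroup.  Then
the subalgebra `A_H = ⊕_{u ∈ H} A_u` is a finitely generated `k`-algebra. -/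
theorem graded_part_over_subgroup_finiteType
    (M : Type*) [AddCommGroup M] [Module.Free ℤ M] [Module.Finite ℤ M]
    [DecidableEq M]
    (k : Type*) [Field k]
    (A : Type*) [CommRing A] [Algebra k A] [Algebra.FiniteType k A]
    (𝒜 : M → Submodule k A) [GradedAlgebra 𝒜]
    (H : AddSubgroup M) :
    ∃ S : Subalgebra k A,
      (Subalgebra.toSubmodule S = ⨆ u ∈ H, 𝒜 u) ∧ S.FG := by
  classical
  obtain ⟨s, hs⟩ := ‹Algebra.FiniteType k A›.out
  -- homogeneous generators
  let ι : Type _ := Σ t : {x // x ∈ s}, {u : M // u ∈ (DirectSum.decompose 𝒜 (t : A)).support}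
  let a : ι → A := fun p => (DirectSum.decompose 𝒜 (p.1 : A) p.2.1 : A)
  let d : ι → M := fun p => p.2.1
  have had : ∀ i : ι, a i ∈ 𝒜 (d i) := fun p => (DirectSum.decompose 𝒜 (p.1 : A) p.2.1).2
  have htop : Algebra.adjoin k (Set.range a) = ⊤ := by
    rw [← top_le_iff, ← hs, Algebra.adjoin_le_iff]
    intro t ht
    rw [← DirectSum.sum_support_decompose 𝒜 t]
    exact sum_mem fun u hu => Algebra.subset_adjoin ⟨⟨⟨t, ht⟩, ⟨u, hu⟩⟩, rfl⟩
  -- monomials and degree map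
  let mono : (ι → ℕ) → A := fun e => ∏ i, a i ^ e i
  let φ : (ι → ℕ) →+ M :=
    { toFun := fun e => ∑ i, e i • d i
      map_zero' := by simp
      map_add' := fun e f => by
        simp only [Pi.add_apply, add_smul]
        exact Finset.sum_add_distrib }
  have hmono_mem : ∀ e : ι → ℕ, mono e ∈ 𝒜 (φ e) := fun e =>
    SetLike.prod_pow_mem_graded 𝒜 d a e fun i _ => had i
  have hmono_zero : mono 0 = 1 := by simp [mono]
  have hmono_add : ∀ e f, mono (e + f) = mono e * mono f := fun e f => by
    simp only [mono, Pi.add_apply, pow_add]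
    exact Finset.prod_mul_distrib
  -- E : exponents with degree in H
  let E : AddSubmonoid (ι → ℕ) := AddSubmonoid.comap φ H.toAddSubmonoid
  have hmemE : ∀ e : ι → ℕ, e ∈ E ↔ φ e ∈ H := fun e => Iff.rfl
  have hsub : ∀ e ∈ E, ∀ f ∈ E, f ≤ e → e - f ∈ E := by
    intro e he f hf hfe
    have hadd : (e - f) + f = e := by
      funext i; have h1 : f i ≤ e i := hfe i; simp only [Pi.add_apply, Pi.sub_apply]; omega
    have : φ (e - f) + φ f = φ e := by rw [← map_add, hadd]
    have heq : φ (e - f) = φ e - φ f := eq_sub_of_add_eq this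
    rw [hmemE, heq]
    exact sub_mem he hf
  obtain ⟨G, hG⟩ := addSubmonoid_fg_of_sub_closed E hsub
  -- the subalgebra
  set T : Submodule k A := ⨆ u ∈ H, 𝒜 u with hT
  have hle : ∀ u ∈ H, 𝒜 u ≤ T := fun u hu => le_iSup₂ (f := fun u _ => 𝒜 u) u hu
  have h1T : (1 : A) ∈ T := hle 0 H.zero_mem (SetLike.one_mem_graded 𝒜)
  have hT' : T = ⨆ u : H, 𝒜 (u : M) := by rw [iSup_subtype]
  have hmulT : ∀ x y : A, x ∈ T → y ∈ T → x * y ∈ T := by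
    intro x y hx hy
    rw [hT'] at hx hy
    refine Submodule.iSup_induction (motive := fun x => x * y ∈ T) _ hx ?_ (by simp [zero_mul, T.zero_mem]) ?_
    · intro u z hz
      refine Submodule.iSup_induction (motive := fun y => z * y ∈ T) _ hy ?_ (by simp [mul_zero, T.zero_mem]) ?_
      · intro v w hw
        exact hle (u + v) (add_mem u.2 v.2) (SetLike.mul_mem_graded hz hw)
      · intro y1 y2 h1 h2
        rw [mul_add]; exact T.add_mem h1 h2
    · intro x1 x2 h1 h2
      rw [add_mul]; exact T.add_mem h1 h2
  refine ⟨T.toSubalgebra h1T hmulT, Submodule.toSubalgebra_toSubmodule _ _ _, ?_⟩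
  -- finite generation
  refine ⟨G.image mono, ?_⟩
  have hGE : (G : Set (ι → ℕ)) ⊆ E := hG ▸ AddSubmonoid.subset_closure
  -- every monomial with exponent in E lies in the adjoin
  have hmonoE : ∀ e ∈ E, mono e ∈ Algebra.adjoin k (↑(G.image mono) : Set A) := by
    intro e he
    rw [← hG] at he
    induction he using AddSubmonoid.closure_induction with
    | mem g hg =>
      exact Algebra.subset_adjoin (Finset.mem_coe.mpr (Finset.mem_image_of_mem mono hg))
    | zero => rw [hmono_zero]; exact one_mem _
    | add e f _ _ h1 h2 => rw [hmono_add]; exact mul_mem h1 h2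
  -- mono's exhaust the monoid closure of the generators
  have hclos : (Submonoid.closure (Set.range a) : Set A) ⊆ Set.range mono := by
    intro z hz
    induction hz using Submonoid.closure_induction with
    | mem z hz =>
      obtain ⟨i, rfl⟩ := hz
      refine ⟨Pi.single i 1, ?_⟩
      simp only [mono]
      rw [Finset.prod_eq_single i (fun j _ hj => by
        rw [Pi.single_eq_of_ne hj, pow_zero]) (by simp)]
      rw [Pi.single_eq_same, pow_one]
    | one => exact ⟨0, hmono_zero⟩
    | mul x y _ _ hx hy =>
      obtain ⟨e, rfl⟩ := hx; obtain ⟨f, rfl⟩ := hy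
      exact ⟨e + f, hmono_add e f⟩
  -- T is contained in the adjoin
  have hTle : T ≤ Subalgebra.toSubmodule (Algebra.adjoin k (↑(G.image mono) : Set A)) := by
    rw [hT]
    refine iSup₂_le fun u hu => ?_
    intro x hx
    have hxspan : x ∈ Submodule.span k (↑(Submonoid.closure (Set.range a)) : Set A) := by
      rw [← Algebra.adjoin_eq_span, htop]; trivial
    have hπx : GradedAlgebra.proj 𝒜 u x = x := by
      rw [GradedAlgebra.proj_apply, DirectSum.decompose_of_mem_same 𝒜 hx]
    have hmap : GradedAlgebra.proj 𝒜 u x ∈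
        Submodule.span k (GradedAlgebra.proj 𝒜 u '' ↑(Submonoid.closure (Set.range a))) := by
      rw [← Submodule.map_span]
      exact ⟨x, hxspan, rfl⟩
    rw [hπx] at hmap
    refine Submodule.span_le.mpr ?_ hmap
    rintro _ ⟨w, hw, rfl⟩
    obtain ⟨e, rfl⟩ := hclos hw
    by_cases hdeg : φ e = u
    · have : GradedAlgebra.proj 𝒜 u (mono e) = mono e := by
        rw [GradedAlgebra.proj_apply, DirectSum.decompose_of_mem_same 𝒜 (hdeg ▸ hmono_mem e)]
      rw [this]
      exact hmonoE e ((hmemE e).mpr (hdeg ▸ hu))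
    · have : GradedAlgebra.proj 𝒜 u (mono e) = 0 := by
        rw [GradedAlgebra.proj_apply, DirectSum.decompose_of_mem_ne 𝒜 (hmono_mem e) hdeg]
      rw [this]
      exact Submodule.zero_mem _
  -- the adjoin is contained in T
  have hadjle : Algebra.adjoin k (↑(G.image mono) : Set A) ≤ T.toSubalgebra h1T hmulT := by
    rw [Algebra.adjoin_le_iff]
    rintro z hz
    simp only [Finset.coe_image, Set.mem_image, Finset.mem_coe] at hz
    obtain ⟨g, hg, rfl⟩ := hz
    exact hle (φ g) ((hmemE g).mp (hGE hg)) (hmono_mem g)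
  exact le_antisymm hadjle fun x hx => hTle hx
end

section
/- For the 𝔾ₘ²-action on ℂ[x,y,z,t,u] with weights wt(x)=(1,1), wt(y)=(2,2), wt(z)=(1,0), wt(t)=(−1,0), wt(u)=(4,2), the ring of invariants of the quotient ring A = ℂ[x,y,z,t,u]/(zty + x² + y + t²u) is the polynomial ring generated by the class of zt; in particular A^{𝔾ₘ²} ≅ ℂ[w] is a polynomial ring in one variable. -/
open MvPolynomial

/-- The `𝔾ₘ² = (ℂ*)²`-action on `ℂ[x,y,z,t,u]` with weights
`wt(x)=(1,1)`, `wt(y)=(2,2)`, `wt(z)=(1,0)`, `wt(t)=(−1,0)`, `wt(u)=(4,2)`: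
`(λ₁,λ₂)` acts by the `ℂ`-algebra map sending the variables (indexed `0,…,4`)
to their rescalings. -/
noncomputable def torusAct (l₁ l₂ : ℂˣ) :
    MvPolynomial (Fin 5) ℂ →ₐ[ℂ] MvPolynomial (Fin 5) ℂ :=
  aeval
    ![C ((l₁ : ℂ) * (l₂ : ℂ)) * X 0,
      C ((l₁ : ℂ) ^ 2 * (l₂ : ℂ) ^ 2) * X 1,
      C (l₁ : ℂ) * X 2,
      C ((l₁ : ℂ)⁻¹) * X 3,
      C ((l₁ : ℂ) ^ 4 * (l₂ : ℂ) ^ 2) * X 4]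

open Finsupp

noncomputable section InvAux

abbrev R5 := MvPolynomial (Fin 5) ℂ
def wt : Fin 5 → ℤ × ℤ := ![(1,1),(2,2),(1,0),(-1,0),(4,2)]
def fpoly : R5 := X 2 * X 3 * X 1 + X 0 ^ 2 + X 1 + X 3 ^ 2 * X 4

lemma weight_wt (d : Fin 5 →₀ ℕ) :
    weight wt d = ((d 0 : ℤ) + 2*d 1 + d 2 - d 3 + 4*d 4,
                   (d 0 : ℤ) + 2*d 1 + 2*d 4) := by
  rw [weight_apply, Finsupp.sum_fintype _ _ (fun i => zero_smul ℕ (wt i))]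
  simp [Fin.sum_univ_five, wt, Prod.ext_iff, Prod.smul_mk]
  constructor <;> ring

lemma mono_expand (d : Fin 5 →₀ ℕ) (c : ℂ) :
    (monomial d c : R5) =
      C c * (X 0)^(d 0) * (X 1)^(d 1) * (X 2)^(d 2) * (X 3)^(d 3) * (X 4)^(d 4) := by
  rw [monomial_eq, Finsupp.prod_fintype _ _ (fun i => pow_zero _), Fin.prod_univ_five]
  ring

lemma torusAct_monomial (l₁ l₂ : ℂˣ) (d : Fin 5 →₀ ℕ) (c : ℂ) :
    torusAct l₁ l₂ (monomial d c) =
      ((l₁ : ℂ) ^ (weight wt d).1 * (l₂ : ℂ) ^ (weight wt d).2) • monomial d c := by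
  have h1 : (l₁ : ℂ) ≠ 0 := l₁.ne_zero
  have h2 : (l₂ : ℂ) ≠ 0 := l₂.ne_zero
  have key : (l₁ : ℂ) ^ (weight wt d).1 * (l₂ : ℂ) ^ (weight wt d).2 =
      ((l₁:ℂ)*(l₂:ℂ))^(d 0) * ((l₁:ℂ)^2*(l₂:ℂ)^2)^(d 1) * (l₁:ℂ)^(d 2) *
        ((l₁:ℂ)⁻¹)^(d 3) * ((l₁:ℂ)^4*(l₂:ℂ)^2)^(d 4) := by
    have e1 : (weight wt d).1 = ((d 0 + 2*d 1 + d 2 + 4*d 4 : ℕ) : ℤ) - ((d 3 : ℕ) : ℤ) := by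
      rw [weight_wt]; push_cast; ring
    have e2 : (weight wt d).2 = ((d 0 + 2*d 1 + 2*d 4 : ℕ) : ℤ) := by
      rw [weight_wt]; push_cast; ring
    rw [e1, e2, zpow_sub₀ h1, zpow_natCast, zpow_natCast, zpow_natCast]
    rw [inv_pow]
    field_simp
    ring
  have expand : torusAct l₁ l₂ (monomial d c) =
      C c * (C ((l₁:ℂ)*(l₂:ℂ)) * X 0)^(d 0) * (C ((l₁:ℂ)^2*(l₂:ℂ)^2) * X 1)^(d 1) *
        (C (l₁:ℂ) * X 2)^(d 2) * (C ((l₁:ℂ)⁻¹) * X 3)^(d 3) *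
        (C ((l₁:ℂ)^4*(l₂:ℂ)^2) * X 4)^(d 4) := by
    rw [mono_expand]
    simp only [map_mul, map_pow, aeval_X, torusAct]
    simp only [Matrix.cons_val_zero, Matrix.cons_val_one, Matrix.head_cons,
      Matrix.cons_val_two, Matrix.tail_cons, Matrix.cons_val_three, Matrix.cons_val_four,
      aeval_C, algebraMap_eq]
  rw [expand, smul_eq_C_mul, key, mono_expand]
  simp only [map_mul, C_pow, mul_pow]
  ring

lemma coeff_torusAct (l₁ l₂ : ℂˣ) (p : R5) (d : Fin 5 →₀ ℕ) :
    coeff d (torusAct l₁ l₂ p) =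
      ((l₁ : ℂ) ^ (weight wt d).1 * (l₂ : ℂ) ^ (weight wt d).2) * coeff d p := by
  classical
  conv_lhs => rw [p.as_sum, map_sum]
  rw [coeff_sum]
  rw [Finset.sum_eq_single d]
  · rw [torusAct_monomial, coeff_smul, coeff_monomial, if_pos rfl, smul_eq_mul]
  · intro b _ hb
    rw [torusAct_monomial, coeff_smul, coeff_monomial, if_neg hb, smul_zero]
  · intro hd
    rw [torusAct_monomial, coeff_smul, coeff_monomial, if_pos rfl, smul_eq_mul,
      MvPolynomial.notMem_support_iff.mp hd, mul_zero]

lemma whc_torusAct (l₁ l₂ : ℂˣ) (p : R5) (m : ℤ × ℤ) :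
    weightedHomogeneousComponent wt m (torusAct l₁ l₂ p) =
      ((l₁ : ℂ) ^ m.1 * (l₂ : ℂ) ^ m.2) • weightedHomogeneousComponent wt m p := by
  classical
  ext d
  rw [coeff_smul, coeff_weightedHomogeneousComponent, coeff_weightedHomogeneousComponent,
    coeff_torusAct]
  split_ifs with h
  · rw [h, smul_eq_mul]
  · rw [smul_zero]

lemma torusAct_fpoly (l₁ l₂ : ℂˣ) :
    torusAct l₁ l₂ fpoly = C ((l₁ : ℂ)^2 * (l₂ : ℂ)^2) * fpoly := by
  have h1 : (l₁ : ℂ) ≠ 0 := l₁.ne_zero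
  have hC : C ((l₁:ℂ)) * C ((l₁:ℂ)⁻¹) = (1 : R5) := by
    rw [← C_mul, mul_inv_cancel₀ h1, C_1]
  simp only [fpoly, torusAct, map_add, map_mul, map_pow, aeval_X]
  simp only [Matrix.cons_val_zero, Matrix.cons_val_one, Matrix.head_cons,
    Matrix.cons_val_two, Matrix.tail_cons, Matrix.cons_val_three, Matrix.cons_val_four]
  linear_combination (C (l₁:ℂ)^2 * C (l₂:ℂ)^2 * X 1 * X 2 * X 3 +
    C (l₁:ℂ)^2 * C (l₂:ℂ)^2 * X 3^2 * X 4 * (C (l₁:ℂ) * C ((l₁:ℂ)⁻¹) + 1)) * hC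

lemma torusAct_zt (l₁ l₂ : ℂˣ) :
    torusAct l₁ l₂ (X 2 * X 3) = X 2 * X 3 := by
  have h1 : (l₁ : ℂ) ≠ 0 := l₁.ne_zero
  have hC : C ((l₁:ℂ)) * C ((l₁:ℂ)⁻¹) = (1 : R5) := by
    rw [← C_mul, mul_inv_cancel₀ h1, C_1]
  simp only [torusAct, map_mul, aeval_X]
  simp only [Matrix.cons_val_two, Matrix.tail_cons, Matrix.head_cons, Matrix.cons_val_three]
  linear_combination (X 2 * X 3) * hC



open Classical in
lemma sum_components {T : Finset (ℤ × ℤ)} (g : R5)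
    (hT : ∀ d ∈ g.support, weight wt d ∈ T) :
    ∑ e ∈ T, weightedHomogeneousComponent wt e g = g := by
  classical
  ext d
  rw [coeff_sum]
  simp only [coeff_weightedHomogeneousComponent]
  rw [Finset.sum_ite_eq]
  by_cases h : coeff d g = 0
  · simp [h]
  · rw [if_pos (hT d (MvPolynomial.mem_support_iff.mpr h))]

lemma snd_nonneg (d : Fin 5 →₀ ℕ) : 0 ≤ (weight wt d).2 := by
  rw [weight_wt]
  positivity

lemma whc_neg2 (g : R5) : weightedHomogeneousComponent wt (-2,-2) g = 0 := by
  apply weightedHomogeneousComponent_eq_zero'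
  intro d _
  intro h
  have := snd_nonneg d
  rw [h] at this
  norm_num at this

lemma hf : IsWeightedHomogeneous wt fpoly (2,2) := by
  have hX : ∀ i : Fin 5, IsWeightedHomogeneous wt (X i : R5) (wt i) :=
    fun i => isWeightedHomogeneous_X ℂ wt i
  have h1 : IsWeightedHomogeneous wt (X 2 * X 3 * X 1 : R5) (2,2) := by
    have := ((hX 2).mul (hX 3)).mul (hX 1)
    convert this using 2 <;> rfl
  have h2 : IsWeightedHomogeneous wt (X 0 ^ 2 : R5) (2,2) := by
    have := (hX 0).mul (hX 0)
    rw [pow_two]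
    convert this using 2 <;> rfl
  have h3 : IsWeightedHomogeneous wt (X 1 : R5) (2,2) := by
    have := hX 1; convert this using 2 <;> rfl
  have h4 : IsWeightedHomogeneous wt (X 3 ^ 2 * X 4 : R5) (2,2) := by
    have := ((hX 3).mul (hX 3)).mul (hX 4)
    rw [pow_two]
    convert this using 2 <;> rfl
  exact ((h1.add h2).add h3).add h4


lemma whc_mul_fpoly (g : R5) (m : ℤ × ℤ) :
    weightedHomogeneousComponent wt m (g * fpoly) =
      weightedHomogeneousComponent wt (m - (2,2)) g * fpoly := by
  classical
  set T : Finset (ℤ × ℤ) := g.support.image (weight wt) with hTdef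
  have hg : ∑ e ∈ T, weightedHomogeneousComponent wt e g = g :=
    sum_components g (fun d hd => Finset.mem_image_of_mem _ hd)
  conv_lhs => rw [← hg]
  rw [Finset.sum_mul, map_sum]
  have hterm : ∀ e : ℤ × ℤ,
      weightedHomogeneousComponent wt m (weightedHomogeneousComponent wt e g * fpoly) =
        if e = m - (2,2) then weightedHomogeneousComponent wt e g * fpoly else 0 := by
    intro e
    have hh : IsWeightedHomogeneous wt (weightedHomogeneousComponent wt e g * fpoly) (e + (2,2)) :=
      (weightedHomogeneousComponent_isWeightedHomogeneous e g).mul hf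
    by_cases he : e = m - (2,2)
    · subst he
      rw [if_pos rfl]
      apply IsWeightedHomogeneous.weightedHomogeneousComponent_same
      rwa [show m - ((2:ℤ),(2:ℤ)) + (2,2) = m from by abel] at hh
    · rw [if_neg he]
      apply IsWeightedHomogeneous.weightedHomogeneousComponent_ne _ hh
      intro h
      exact he (by rw [h]; abel)
  simp_rw [hterm]
  rw [Finset.sum_ite_eq']
  by_cases hm : m - ((2:ℤ),(2:ℤ)) ∈ T
  · rw [if_pos hm]
  · rw [if_neg hm]
    have : weightedHomogeneousComponent wt (m - (2,2)) g = 0 := by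
      apply weightedHomogeneousComponent_eq_zero'
      intro d hd h
      exact hm (h ▸ Finset.mem_image_of_mem _ hd)
    rw [this, zero_mul]



lemma component_mem_span {q : R5} (hq : q ∈ Ideal.span {fpoly}) (m : ℤ × ℤ) :
    weightedHomogeneousComponent wt m q ∈ Ideal.span {fpoly} := by
  obtain ⟨g, rfl⟩ := Ideal.mem_span_singleton'.mp hq
  rw [whc_mul_fpoly]
  exact Ideal.mem_span_singleton'.mpr ⟨_, rfl⟩

lemma whc_zero_of_mem {q : R5} (hq : q ∈ Ideal.span {fpoly}) :
    weightedHomogeneousComponent wt 0 q = 0 := by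
  obtain ⟨g, rfl⟩ := Ideal.mem_span_singleton'.mp hq
  rw [whc_mul_fpoly, show ((0:ℤ×ℤ) - (2,2)) = ((-2,-2) : ℤ × ℤ) from by
    rw [Prod.ext_iff]; constructor <;> norm_num, whc_neg2, zero_mul]

lemma mono_of_weight_zero {d : Fin 5 →₀ ℕ} (h : weight wt d = 0) :
    d = single 2 (d 2) + single 3 (d 2) := by
  rw [weight_wt, show (0:ℤ×ℤ) = ((0:ℤ),(0:ℤ)) from rfl, Prod.mk.injEq] at h
  obtain ⟨h1, h2⟩ := h
  have h0 : d 0 = 0 ∧ d 1 = 0 ∧ d 4 = 0 ∧ d 3 = d 2 := by omega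
  ext i
  fin_cases i <;>
    simp [Finsupp.add_apply, Finsupp.single_apply, h0.1, h0.2.1, h0.2.2.1, h0.2.2.2]

lemma monomial_zt (n : ℕ) (c : ℂ) :
    (monomial (single 2 n + single 3 n) c : R5) = C c * (X 2 * X 3) ^ n := by
  rw [mul_pow, X_pow_eq_monomial, X_pow_eq_monomial, monomial_mul, C_mul_monomial, mul_one, mul_one]

set_option maxHeartbeats 1000000 in
lemma whc0_mem_adjoin (p : R5) :
    weightedHomogeneousComponent wt 0 p ∈ Algebra.adjoin ℂ {(X 2 * X 3 : R5)} := by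
  classical
  rw [weightedHomogeneousComponent_apply]
  apply Subalgebra.sum_mem
  intro d hd
  rw [Finset.mem_filter] at hd
  rw [mono_of_weight_zero hd.2, monomial_zt (d 2) (coeff (single 2 (d 2) + single 3 (d 2)) p)]
  exact mul_mem (by rw [← algebraMap_eq]; exact Subalgebra.algebraMap_mem _ _)
    (pow_mem (Algebra.self_mem_adjoin_singleton ℂ _) _)

lemma isWH_zt : IsWeightedHomogeneous wt (X 2 * X 3 : R5) 0 := by
  have := (isWeightedHomogeneous_X ℂ wt 2).mul (isWeightedHomogeneous_X ℂ wt 3)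
  convert this using 2
  rfl

lemma isWH_zt_pow (n : ℕ) : IsWeightedHomogeneous wt ((X 2 * X 3 : R5) ^ n) 0 := by
  induction n with
  | zero => rw [pow_zero]; exact isWeightedHomogeneous_one ℂ wt
  | succ n ih =>
    rw [pow_succ]
    have := ih.mul isWH_zt
    rwa [add_zero] at this

lemma isWH_aeval_zt (P : Polynomial ℂ) :
    IsWeightedHomogeneous wt (Polynomial.aeval (X 2 * X 3 : R5) P) 0 := by
  induction P using Polynomial.induction_on' with
  | add p q hp hq => rw [map_add]; exact hp.add hq
  | monomial n a =>
    rw [Polynomial.aeval_monomial]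
    have := (isWeightedHomogeneous_C wt (σ := Fin 5) a).mul (isWH_zt_pow n)
    rwa [zero_add, ← algebraMap_eq] at this

lemma coeff_aeval_zt (P : Polynomial ℂ) (n : ℕ) :
    coeff (single 2 n + single 3 n) (Polynomial.aeval (X 2 * X 3 : R5) P) = P.coeff n := by
  classical
  induction P using Polynomial.induction_on' with
  | add p q hp hq => rw [map_add, coeff_add, hp, hq, Polynomial.coeff_add]
  | monomial k a =>
    rw [Polynomial.aeval_monomial, algebraMap_eq, ← monomial_zt]
    by_cases h : k = n
    · subst h; simp [coeff_monomial, Polynomial.coeff_monomial]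
    · have hne : (single 2 k + single 3 k : Fin 5 →₀ ℕ) ≠ single 2 n + single 3 n := by
        intro he
        apply h
        have := DFunLike.congr_fun he (2 : Fin 5)
        simpa [Finsupp.single_apply] using this
      simp [coeff_monomial, Polynomial.coeff_monomial, hne, h, Ne.symm h]



lemma smul_mem_cancel {s : ℂ} (hs : s ≠ 0) {q : R5} (h : s • q ∈ Ideal.span {fpoly}) :
    q ∈ Ideal.span {fpoly} := by
  have h2 := Ideal.mul_mem_left _ (C s⁻¹) h
  rwa [smul_eq_C_mul, ← mul_assoc, ← C_mul, inv_mul_cancel₀ hs, C_1, one_mul] at h2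

lemma two_zpow_eq_one {n : ℤ} (h : (2:ℂ) ^ n = 1) : n = 0 := by
  have h2 := congrArg norm h
  rw [norm_zpow] at h2
  have habs : ‖(2:ℂ)‖ = 2 := by norm_num
  rw [habs, norm_one] at h2
  exact zpow_right_injective₀ (by norm_num : (0:ℝ) < 2) (by norm_num)
    (by show (2:ℝ) ^ n = (2:ℝ) ^ (0:ℤ); rw [h2, zpow_zero])

lemma exists_scalar (m : ℤ × ℤ) (hm : m ≠ 0) :
    ∃ l₁ l₂ : ℂˣ, (l₁:ℂ) ^ m.1 * (l₂:ℂ) ^ m.2 ≠ 1 := by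
  set u2 : ℂˣ := Units.mk0 (2:ℂ) two_ne_zero with hu2
  by_cases h1 : m.1 = 0
  · have hm2 : m.2 ≠ 0 := by
      intro h2
      exact hm (Prod.ext h1 h2)
    refine ⟨1, u2, ?_⟩
    simp only [Units.val_one, one_zpow, one_mul, hu2, Units.val_mk0]
    intro h
    exact hm2 (two_zpow_eq_one h)
  · refine ⟨u2, 1, ?_⟩
    simp only [Units.val_one, one_zpow, mul_one, hu2, Units.val_mk0]
    intro h
    exact h1 (two_zpow_eq_one h)

end InvAux


/-- For the `𝔾ₘ²`-action above on `A = ℂ[x,y,z,t,u]/(zty + x² + y + t²u)`,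
the ring of invariants is the polynomial ring generated by the class `w` of
`zt`: an element of `A` is invariant if and only if it lies in the subalgebra
generated by `w`, and this subalgebra is `ℂ`-isomorphic to a polynomial ring
in one variable. -/
theorem invariant_ring_is_polynomial_ring :
    ∀ I : Ideal (MvPolynomial (Fin 5) ℂ),
      I = Ideal.span {X 2 * X 3 * X 1 + X 0 ^ 2 + X 1 + X 3 ^ 2 * X 4} →
      (∀ a : MvPolynomial (Fin 5) ℂ ⧸ I,
        (∀ (l₁ l₂ : ℂˣ) (p : MvPolynomial (Fin 5) ℂ),
            Ideal.Quotient.mkₐ ℂ I p = a →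
            Ideal.Quotient.mkₐ ℂ I (torusAct l₁ l₂ p) = a) ↔
          a ∈ Algebra.adjoin ℂ {Ideal.Quotient.mkₐ ℂ I (X 2 * X 3)}) ∧
      Nonempty
        ((Algebra.adjoin ℂ
            ({Ideal.Quotient.mkₐ ℂ I (X 2 * X 3)} :
              Set (MvPolynomial (Fin 5) ℂ ⧸ I))) ≃ₐ[ℂ] Polynomial ℂ) := by
  intro I hI
  have hIf : I = Ideal.span {fpoly} := hI
  subst hI
  have hIf' : Ideal.span {(X 2 * X 3 * X 1 + X 0 ^ 2 + X 1 + X 3 ^ 2 * X 4 : R5)}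
      = Ideal.span {fpoly} := rfl
  constructor
  · intro a
    constructor
    · -- invariant → in adjoin
      intro hinv
      obtain ⟨p, hp⟩ := Ideal.Quotient.mkₐ_surjective ℂ _ a
      have hcomp : ∀ m : ℤ × ℤ, m ≠ 0 →
          weightedHomogeneousComponent wt m p ∈ Ideal.span {fpoly} := by
        intro m hm
        obtain ⟨l₁, l₂, hl⟩ := exists_scalar m hm
        have h1 : Ideal.Quotient.mkₐ ℂ _ (torusAct l₁ l₂ p) = a := hinv l₁ l₂ p hp
        have h2 : torusAct l₁ l₂ p - p ∈ Ideal.span {fpoly} := by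
          rw [← hIf']
          apply Ideal.Quotient.eq.mp
          rw [← Ideal.Quotient.mkₐ_eq_mk ℂ, h1, hp]
        have h3 := component_mem_span h2 m
        rw [map_sub, whc_torusAct] at h3
        have h4 : ((l₁:ℂ) ^ m.1 * (l₂:ℂ) ^ m.2 - 1) •
            weightedHomogeneousComponent wt m p ∈ Ideal.span {fpoly} := by
          rwa [sub_smul, one_smul]
        exact smul_mem_cancel (sub_ne_zero_of_ne hl) h4
      have hdecomp : p - weightedHomogeneousComponent wt 0 p ∈ Ideal.span {fpoly} := by
        classical
        set T : Finset (ℤ × ℤ) := insert 0 (p.support.image (weight wt)) with hT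
        have hsum : ∑ e ∈ T, weightedHomogeneousComponent wt e p = p :=
          sum_components p (fun d hd =>
            Finset.mem_insert_of_mem (Finset.mem_image_of_mem _ hd))
        have h0T : (0 : ℤ × ℤ) ∈ T := Finset.mem_insert_self _ _
        rw [← Finset.add_sum_erase T _ h0T] at hsum
        have heq : p - weightedHomogeneousComponent wt 0 p =
            ∑ e ∈ T.erase 0, weightedHomogeneousComponent wt e p :=
          sub_eq_iff_eq_add'.mpr hsum.symm
        rw [heq]
        exact Ideal.sum_mem _ (fun e he => hcomp e (Finset.ne_of_mem_erase he))
      have ha0 : a = Ideal.Quotient.mkₐ ℂ _ (weightedHomogeneousComponent wt 0 p) := by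
        rw [← hp, Ideal.Quotient.mkₐ_eq_mk ℂ]
        apply Ideal.Quotient.eq.mpr
        rw [hIf']
        exact hdecomp
      rw [ha0]
      have hmem := whc0_mem_adjoin p
      have himg : Ideal.Quotient.mkₐ ℂ
            (Ideal.span {(X 2 * X 3 * X 1 + X 0 ^ 2 + X 1 + X 3 ^ 2 * X 4 : R5)})
            (weightedHomogeneousComponent wt 0 p) ∈
          (Algebra.adjoin ℂ {(X 2 * X 3 : R5)}).map (Ideal.Quotient.mkₐ ℂ
            (Ideal.span {(X 2 * X 3 * X 1 + X 0 ^ 2 + X 1 + X 3 ^ 2 * X 4 : R5)})) :=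
        Subalgebra.mem_map.mpr ⟨_, hmem, rfl⟩
      rwa [AlgHom.map_adjoin, Set.image_singleton] at himg
    · -- in adjoin → invariant
      intro ha l₁ l₂ p hp
      have hIinv : ∀ q ∈ Ideal.span {(X 2 * X 3 * X 1 + X 0 ^ 2 + X 1 + X 3 ^ 2 * X 4 : R5)},
          (Ideal.Quotient.mkₐ ℂ (Ideal.span {(X 2 * X 3 * X 1 + X 0 ^ 2 + X 1 + X 3 ^ 2 * X 4 : R5)})).comp
            (torusAct l₁ l₂) q = 0 := by
        intro q hq
        rw [hIf'] at hq
        obtain ⟨g, rfl⟩ := Ideal.mem_span_singleton'.mp hq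
        have hf0 : Ideal.Quotient.mk
            (Ideal.span {(X 2 * X 3 * X 1 + X 0 ^ 2 + X 1 + X 3 ^ 2 * X 4 : R5)}) fpoly = 0 := by
          rw [Ideal.Quotient.eq_zero_iff_mem]
          exact Ideal.subset_span rfl
        simp only [AlgHom.comp_apply, map_mul, torusAct_fpoly, Ideal.Quotient.mkₐ_eq_mk,
          hf0, mul_zero]
      set Tbar := Ideal.Quotient.liftₐ _ _ hIinv with hTbar
      have hTm : ∀ q : R5, Tbar (Ideal.Quotient.mkₐ ℂ _ q) =
          Ideal.Quotient.mkₐ ℂ _ (torusAct l₁ l₂ q) := by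
        intro q
        rw [hTbar, Ideal.Quotient.liftₐ_apply, Ideal.Quotient.mkₐ_eq_mk]
        rfl
      have hfix : Tbar a = a := by
        have hsub : Algebra.adjoin ℂ
            {Ideal.Quotient.mkₐ ℂ (Ideal.span {(X 2 * X 3 * X 1 + X 0 ^ 2 + X 1 + X 3 ^ 2 * X 4 : R5)}) (X 2 * X 3)} ≤
            AlgHom.equalizer Tbar (AlgHom.id ℂ _) := by
          apply Algebra.adjoin_le
          intro x hx
          rw [Set.mem_singleton_iff] at hx
          subst hx
          show Tbar _ = _
          rw [hTm, torusAct_zt]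
          rfl
        exact hsub ha
      calc Ideal.Quotient.mkₐ ℂ _ (torusAct l₁ l₂ p) = Tbar (Ideal.Quotient.mkₐ ℂ _ p) :=
            (hTm p).symm
        _ = Tbar a := by rw [hp]
        _ = a := hfix
  · -- part 2
    have inj : Function.Injective (Polynomial.aeval
        (Ideal.Quotient.mkₐ ℂ (Ideal.span {(X 2 * X 3 * X 1 + X 0 ^ 2 + X 1 + X 3 ^ 2 * X 4 : R5)}) (X 2 * X 3)) :
        Polynomial ℂ →ₐ[ℂ] _) := by
      rw [injective_iff_map_eq_zero]
      intro P hP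
      have hq : Ideal.Quotient.mkₐ ℂ
          (Ideal.span {(X 2 * X 3 * X 1 + X 0 ^ 2 + X 1 + X 3 ^ 2 * X 4 : R5)})
          (Polynomial.aeval (X 2 * X 3 : R5) P) = 0 := by
        rw [← Polynomial.aeval_algHom_apply]
        exact hP
      have hmem : Polynomial.aeval (X 2 * X 3 : R5) P ∈ Ideal.span {fpoly} := by
        rw [← hIf']
        rwa [Ideal.Quotient.mkₐ_eq_mk, Ideal.Quotient.eq_zero_iff_mem] at hq
      have h0 := whc_zero_of_mem hmem
      rw [IsWeightedHomogeneous.weightedHomogeneousComponent_same (isWH_aeval_zt P)] at h0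
      ext n
      rw [← coeff_aeval_zt P n, h0, Polynomial.coeff_zero, coeff_zero]
    exact ⟨((Subalgebra.equivOfEq _ _ (Algebra.adjoin_singleton_eq_range_aeval ℂ _)).trans
      (AlgEquiv.ofInjective _ inj).symm)⟩
end
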